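/- For all n ≥ 1, Σ_{σ ∈ Av_n(132,321)} q^{inv σ} = 1 + Σ_{k=1}^{n-1} (q^{k(n-k+1)} − q^k)/(q^k − 1), where Av_n(132,321) is the set of permutations of {1,…,n} avoiding both 132 and 321. Equivalently, Σ_{σ ∈ Av_n(132,321)} q^{inv σ} = 1 + Σ_{k=1}^{n-1} Σ_{j=1}^{n-k} q^{jk}. -/

import Mathlib

open scoped Classical

/-- `σ` contains the pattern `π`. -/
def permContains {n k : ℕ} (σ : Equiv.Perm (Fin n)) (π : Equiv.Perm (Fin k)) : Prop :=
  ∃ f : Fin k → Fin n, StrictMono f ∧ ∀ i j : Fin k, π i < π j ↔ σ (f i) < σ (f j)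

/-- `σ` avoids the pattern `π`. -/
def permAvoids {n k : ℕ} (σ : Equiv.Perm (Fin n)) (π : Equiv.Perm (Fin k)) : Prop :=
  ¬ permContains σ π

def p123 : Equiv.Perm (Fin 3) := 1
def p132 : Equiv.Perm (Fin 3) := Equiv.swap 1 2
def p213 : Equiv.Perm (Fin 3) := Equiv.swap 0 1
def p231 : Equiv.Perm (Fin 3) := finRotate 3
def p312 : Equiv.Perm (Fin 3) := (finRotate 3)⁻¹
def p321 : Equiv.Perm (Fin 3) := Equiv.swap 0 2

/-- Descent set of a permutation, as a set of (1-based) positions `i` with `a_i > a_{i+1}`. -/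
def desSet {n : ℕ} (σ : Equiv.Perm (Fin n)) : Finset ℕ :=
  (Finset.Ico 1 n).filter
    (fun i => ∀ h : i < n, σ ⟨i, h⟩ < σ ⟨i - 1, Nat.lt_of_le_of_lt (Nat.sub_le i 1) h⟩)

/-- Major index: sum of descent positions. -/
def majIdx {n : ℕ} (σ : Equiv.Perm (Fin n)) : ℕ := ∑ i ∈ desSet σ, i

/-- Number of descents. -/
def desNum {n : ℕ} (σ : Equiv.Perm (Fin n)) : ℕ := (desSet σ).card

/-- Number of inversions. -/
def invNum {n : ℕ} (σ : Equiv.Perm (Fin n)) : ℕ :=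
  ((Finset.univ : Finset (Fin n × Fin n)).filter (fun p => p.1 < p.2 ∧ σ p.2 < σ p.1)).card

/-! Auxiliary material -/

lemma contains132 {n : ℕ} (σ : Equiv.Perm (Fin n)) (a b c : Fin n)
    (hab : a < b) (hbc : b < c) (h1 : σ a < σ c) (h2 : σ c < σ b) :
    permContains σ p132 := by
  have h3 : σ a < σ b := h1.trans h2
  refine ⟨![a, b, c], ?_, ?_⟩
  · intro i j hij
    fin_cases i <;> fin_cases j <;>
      first
        | exact absurd hij (by decide)
        | exact hab | exact hbc | exact hab.trans hbc
  · intro i j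
    fin_cases i <;> fin_cases j <;>
      first
        | exact iff_of_false (by decide) (lt_irrefl _)
        | exact iff_of_true (by decide) h1
        | exact iff_of_true (by decide) h2
        | exact iff_of_true (by decide) h3
        | exact iff_of_false (by decide) (lt_asymm h1)
        | exact iff_of_false (by decide) (lt_asymm h2)
        | exact iff_of_false (by decide) (lt_asymm h3)

lemma contains321 {n : ℕ} (σ : Equiv.Perm (Fin n)) (a b c : Fin n)
    (hab : a < b) (hbc : b < c) (h1 : σ b < σ a) (h2 : σ c < σ b) :
    permContains σ p321 := by
  have h3 : σ c < σ a := h2.trans h1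
  refine ⟨![a, b, c], ?_, ?_⟩
  · intro i j hij
    fin_cases i <;> fin_cases j <;>
      first
        | exact absurd hij (by decide)
        | exact hab | exact hbc | exact hab.trans hbc
  · intro i j
    fin_cases i <;> fin_cases j <;>
      first
        | exact iff_of_false (by decide) (lt_irrefl _)
        | exact iff_of_true (by decide) h1
        | exact iff_of_true (by decide) h2
        | exact iff_of_true (by decide) h3
        | exact iff_of_false (by decide) (lt_asymm h1)
        | exact iff_of_false (by decide) (lt_asymm h2)
        | exact iff_of_false (by decide) (lt_asymm h3)

def rotFun (n j k : ℕ) (i : Fin n) : Fin n :=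
  if h1 : (i : ℕ) < j ∧ j + k ≤ n then ⟨i + k, by omega⟩
  else if h2 : j ≤ (i : ℕ) ∧ (i : ℕ) < j + k ∧ j + k ≤ n then ⟨i - j, by omega⟩
  else i

lemma rotFun_val {n j k : ℕ} (hjk : j + k ≤ n) (i : Fin n) :
    (rotFun n j k i : ℕ) =
      if (i : ℕ) < j then i + k else if (i : ℕ) < j + k then i - j else i := by
  unfold rotFun
  split_ifs <;> simp_all

lemma rotFun_id {n j k : ℕ} (hjk : ¬ j + k ≤ n) (i : Fin n) : rotFun n j k i = i := by
  unfold rotFun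
  rw [dif_neg (by omega), dif_neg (by omega)]

lemma rotFun_inv (n j k : ℕ) : Function.LeftInverse (rotFun n k j) (rotFun n j k) := by
  intro i
  by_cases h : j + k ≤ n
  · apply Fin.ext
    rw [rotFun_val (by omega), rotFun_val h]
    split_ifs <;> omega
  · rw [rotFun_id (by omega), rotFun_id h]

def rotPerm (n j k : ℕ) : Equiv.Perm (Fin n) :=
  ⟨rotFun n j k, rotFun n k j, rotFun_inv n j k, rotFun_inv n k j⟩

lemma rotPerm_val {n j k : ℕ} (hjk : j + k ≤ n) (i : Fin n) :
    (rotPerm n j k i : ℕ) =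
      if (i : ℕ) < j then i + k else if (i : ℕ) < j + k then i - j else i :=
  rotFun_val hjk i

lemma rotPerm_symm (n j k : ℕ) : (rotPerm n j k).symm = rotPerm n k j := rfl

lemma rotPerm_avoids132 {n j k : ℕ} (hjk : j + k ≤ n) :
    permAvoids (rotPerm n j k) p132 := by
  rintro ⟨f, hmono, hpat⟩
  set σ := rotPerm n j k
  have hab : f 0 < f 1 := hmono (by decide)
  have hbc : f 1 < f 2 := hmono (by decide)
  have h1 : σ (f 0) < σ (f 1) := (hpat 0 1).mp (by decide)
  have h2 : σ (f 2) < σ (f 1) := (hpat 2 1).mp (by decide)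
  have h3 : σ (f 0) < σ (f 2) := (hpat 0 2).mp (by decide)
  rw [Fin.lt_def] at h1 h2 h3 hab hbc
  rw [rotPerm_val hjk, rotPerm_val hjk] at h1 h2 h3
  have b0 := (f 0).isLt
  have b1 := (f 1).isLt
  have b2 := (f 2).isLt
  split_ifs at h1 h2 h3 <;> omega

lemma rotPerm_avoids321 {n j k : ℕ} (hjk : j + k ≤ n) :
    permAvoids (rotPerm n j k) p321 := by
  rintro ⟨f, hmono, hpat⟩
  set σ := rotPerm n j k
  have hab : f 0 < f 1 := hmono (by decide)
  have hbc : f 1 < f 2 := hmono (by decide)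
  have h1 : σ (f 1) < σ (f 0) := (hpat 1 0).mp (by decide)
  have h2 : σ (f 2) < σ (f 1) := (hpat 2 1).mp (by decide)
  rw [Fin.lt_def] at h1 h2 hab hbc
  rw [rotPerm_val hjk, rotPerm_val hjk] at h1 h2
  have b0 := (f 0).isLt
  have b1 := (f 1).isLt
  have b2 := (f 2).isLt
  split_ifs at h1 h2 <;> omega

lemma card_filter_Ico {n a b : ℕ} (hb : b ≤ n) :
    (Finset.univ.filter fun i : Fin n => a ≤ (i : ℕ) ∧ (i : ℕ) < b).card = b - a := by
  rw [← Nat.card_Ico a b]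
  apply Finset.card_bij' (fun (i : Fin n) _ => (i : ℕ))
    (fun m hm => (⟨m, by simp at hm; omega⟩ : Fin n))
  all_goals intro x hx
  all_goals simp at hx ⊢
  all_goals omega

lemma invNum_rotPerm {n j k : ℕ} (hjk : j + k ≤ n) :
    invNum (rotPerm n j k) = j * k := by
  unfold invNum
  have hset : (Finset.univ.filter
        (fun p : Fin n × Fin n => p.1 < p.2 ∧ rotPerm n j k p.2 < rotPerm n j k p.1))
      = (Finset.univ.filter fun i : Fin n => 0 ≤ (i : ℕ) ∧ (i : ℕ) < j) ×ˢ
        (Finset.univ.filter fun i : Fin n => j ≤ (i : ℕ) ∧ (i : ℕ) < j + k) := by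
    ext p
    simp only [Finset.mem_filter, Finset.mem_product, Finset.mem_univ, true_and, Fin.lt_def]
    rw [rotPerm_val hjk, rotPerm_val hjk]
    have b1 := p.1.isLt
    have b2 := p.2.isLt
    split_ifs <;> omega
  rw [hset, Finset.card_product, card_filter_Ico (by omega), card_filter_Ico hjk]
  simp

lemma rotPerm_zero (n : ℕ) : rotPerm n 0 0 = 1 := by
  ext i
  rw [rotPerm_val (by omega)]
  simp

lemma avoider_eq_one_or_rot {n : ℕ} (hn : 0 < n) (σ : Equiv.Perm (Fin n))
    (hA : permAvoids σ p132) (hB : permAvoids σ p321) :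
    σ = 1 ∨ ∃ j k : ℕ, 1 ≤ j ∧ 1 ≤ k ∧ j + k ≤ n ∧ σ = rotPerm n j k := by
  have no132 : ∀ a b c : Fin n, a < b → b < c → σ a < σ c → σ c < σ b → False :=
    fun a b c h1 h2 h3 h4 => hA (contains132 σ a b c h1 h2 h3 h4)
  have no321 : ∀ a b c : Fin n, a < b → b < c → σ b < σ a → σ c < σ b → False :=
    fun a b c h1 h2 h3 h4 => hB (contains321 σ a b c h1 h2 h3 h4)
  have inj : ∀ a b : Fin n, (σ a : ℕ) = (σ b : ℕ) → a = b :=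
    fun a b h => σ.injective (Fin.ext h)
  set z : Fin n := ⟨0, hn⟩ with hzdef
  by_cases hk0 : σ z = z
  · -- k = 0 : σ is the identity
    left
    ext i
    by_contra hne
    -- minimal counterexample
    have hex : ∃ m : ℕ, ∃ hm : m < n, σ ⟨m, hm⟩ ≠ ⟨m, hm⟩ := by
      refine ⟨(i : ℕ), i.isLt, ?_⟩
      simp only [Fin.eta]
      intro h
      exact hne (by rw [h]; rfl)
    classical
    set m := Nat.find hex with hmdef
    obtain ⟨hm, hmne⟩ := Nat.find_spec hex
    have hmin : ∀ t, t < m → ∀ ht : t < n, σ ⟨t, ht⟩ = ⟨t, ht⟩ := by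
      intro t htm ht
      by_contra hc
      exact Nat.find_min hex htm ⟨ht, hc⟩
    have hm1 : 1 ≤ m := by
      rcases Nat.eq_zero_or_pos m with h0 | h1
      · exfalso; apply hmne; rw [show (⟨m, hm⟩ : Fin n) = z by apply Fin.ext; simp [h0]; rfl]
        exact hk0
      · exact h1
    -- σ ⟨m⟩ > m
    have hgt : m < (σ ⟨m, hm⟩ : ℕ) := by
      rcases Nat.lt_trichotomy (σ ⟨m, hm⟩ : ℕ) m with h | h | h
      · exfalso
        have := hmin _ h (lt_trans h hm)
        have : (⟨(σ ⟨m, hm⟩ : ℕ), lt_trans h hm⟩ : Fin n) = ⟨m, hm⟩ := by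
          apply inj
          rw [this]
        simp only [Fin.mk.injEq] at this
        omega
      · exact absurd (Fin.ext h) hmne
      · exact h
    -- position of value m
    set p := σ.symm ⟨m, hm⟩ with hp
    have hpv : σ p = ⟨m, hm⟩ := σ.apply_symm_apply _
    have hpgt : m < (p : ℕ) := by
      rcases Nat.lt_trichotomy (p : ℕ) m with h | h | h
      · exfalso
        have h2 := hmin _ h (lt_trans h hm)
        rw [Fin.eta] at h2
        rw [h2] at hpv
        have := congrArg Fin.val hpv
        simp at this
        omega
      · exfalso
        have : p = ⟨m, hm⟩ := Fin.ext h
        rw [this] at hpv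
        exact hmne hpv
      · exact h
    -- pattern 132 on (z, ⟨m⟩, p)
    apply no132 z ⟨m, hm⟩ p
    · exact Fin.mk_lt_mk.mpr (by omega)
    · exact Fin.lt_def.mpr (by simpa using hpgt)
    · rw [hk0, hpv]; exact Fin.lt_def.mpr (by simp [hzdef]; omega)
    · rw [hpv]; exact Fin.lt_def.mpr (by simpa using hgt)
  · -- k ≥ 1
    right
    set k : ℕ := (σ z : ℕ) with hkdef
    have hk1 : 1 ≤ k := by
      rcases Nat.eq_zero_or_pos k with h0 | h1
      · exfalso; exact hk0 (Fin.ext (by simp [← hkdef, h0]; rfl))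
      · exact h1
    set jF := σ.symm z with hjF
    set j : ℕ := (jF : ℕ) with hjdef
    have hjz : σ jF = z := σ.apply_symm_apply z
    have hj1 : 1 ≤ j := by
      rcases Nat.eq_zero_or_pos j with h0 | h1
      · exfalso
        have : jF = z := Fin.ext (by simp [← hjdef, h0]; rfl)
        rw [this] at hjz
        exact hk0 hjz
      · exact h1
    have hjn : j < n := jF.isLt
    -- Claim A
    have A : ∀ i, ∀ hi : i < n, i < j → (σ ⟨i, hi⟩ : ℕ) = i + k := by
      intro i
      induction i using Nat.strong_induction_on with
      | _ i IH =>
        intro hi hij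
        rcases Nat.eq_zero_or_pos i with h0 | hi1
        · subst h0; simp [← hkdef, ← hzdef]
        -- σ i ≠ 0
        have hne0 : (σ ⟨i, hi⟩ : ℕ) ≠ 0 := by
          intro h
          have : (⟨i, hi⟩ : Fin n) = jF := by
            apply inj; rw [hjz]; simpa using h
          have := congrArg Fin.val this
          simp [← hjdef] at this
          omega
        -- σ i ≥ k
        have hgek : k ≤ (σ ⟨i, hi⟩ : ℕ) := by
          by_contra hlt
          push_neg at hlt
          apply no321 z ⟨i, hi⟩ jF
          · exact Fin.mk_lt_mk.mpr (by omega)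
          · exact Fin.lt_def.mpr (by simp [← hjdef]; omega)
          · exact Fin.lt_def.mpr (by simp [← hkdef] at hlt ⊢; omega)
          · rw [hjz]; exact Fin.lt_def.mpr (by simp [hzdef]; omega)
        -- σ i ≥ k + i
        have hgeki : k + i ≤ (σ ⟨i, hi⟩ : ℕ) := by
          by_contra hlt
          push_neg at hlt
          set t := (σ ⟨i, hi⟩ : ℕ) - k with ht
          have htlt : t < i := by omega
          have := IH t htlt (by omega) (by omega)
          have heq : (⟨i, hi⟩ : Fin n) = ⟨t, by omega⟩ := by
            apply inj; omega
          simp only [Fin.mk.injEq] at heq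
          omega
        rcases Nat.lt_or_ge (k + i) (σ ⟨i, hi⟩ : ℕ) with hgt | hle
        swap
        · omega
        -- contradiction case: find value k+i
        exfalso
        have hkin : k + i < n := lt_trans hgt (σ ⟨i, hi⟩).isLt
        set p := σ.symm ⟨k + i, hkin⟩ with hp
        have hpv : σ p = ⟨k + i, hkin⟩ := σ.apply_symm_apply _
        have hpgt : i < (p : ℕ) := by
          rcases Nat.lt_trichotomy (p : ℕ) i with h | h | h
          · exfalso
            have h2 := IH _ h (by omega) (by omega)
            rw [Fin.eta] at h2
            rw [hpv] at h2
            simp at h2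
            omega
          · exfalso
            have hpe : p = ⟨i, hi⟩ := Fin.ext (by simpa using h)
            rw [hpe] at hpv
            have := congrArg Fin.val hpv
            simp at this
            omega
          · exact h
        apply no132 z ⟨i, hi⟩ p
        · exact Fin.mk_lt_mk.mpr (by omega)
        · exact Fin.lt_def.mpr (by simpa using hpgt)
        · rw [hpv]; exact Fin.lt_def.mpr (by simp [← hkdef]; omega)
        · rw [hpv]; exact Fin.lt_def.mpr (by simp; omega)
    -- j + k ≤ n
    have hjkn : j + k ≤ n := by
      have := A (j - 1) (by omega) (by omega)
      have hlt := (σ ⟨j - 1, by omega⟩).isLt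
      omega
    -- Claim B
    have B : ∀ i, ∀ hi : i < n, j ≤ i → i < j + k → (σ ⟨i, hi⟩ : ℕ) = i - j := by
      intro i
      induction i using Nat.strong_induction_on with
      | _ i IH =>
        intro hi hji hijk
        rcases Nat.eq_or_lt_of_le hji with h0 | hgt0
        · have : (⟨i, hi⟩ : Fin n) = jF := Fin.ext (by simp [← hjdef]; omega)
          rw [this, hjz]
          simp [hzdef]
          omega
        -- i > j; value i - j
        have hvlt : i - j < n := by omega
        set p := σ.symm ⟨i - j, hvlt⟩ with hp
        have hpv : σ p = ⟨i - j, hvlt⟩ := σ.apply_symm_apply _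
        have hpj : j ≤ (p : ℕ) := by
          by_contra hc
          push_neg at hc
          have h2 := A _ p.isLt hc
          rw [Fin.eta, hpv] at h2
          simp at h2
          omega
        have hpi : ¬ ((p : ℕ) < i) := by
          intro hc
          have h2 := IH _ hc p.isLt hpj (by omega)
          rw [Fin.eta, hpv] at h2
          simp at h2
          omega
        rcases Nat.eq_or_lt_of_le (Nat.le_of_not_lt hpi) with hpe | hpgt
        · -- p = i
          have : p = ⟨i, hi⟩ := Fin.ext (by simp only [Fin.val_mk]; omega)
          rw [this] at hpv
          rw [hpv]
        -- p > i : contradiction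
        exfalso
        -- σ i > i - j
        have hsgt : i - j < (σ ⟨i, hi⟩ : ℕ) := by
          rcases Nat.lt_trichotomy (σ ⟨i, hi⟩ : ℕ) (i - j) with h | h | h
          · exfalso
            set t := (σ ⟨i, hi⟩ : ℕ) + j with ht
            have h2 := IH t (by omega) (by omega) (by omega) (by omega)
            have heq : (⟨i, hi⟩ : Fin n) = ⟨t, by omega⟩ := by apply inj; omega
            simp only [Fin.mk.injEq] at heq
            omega
          · exfalso
            have : (⟨i, hi⟩ : Fin n) = p := by
              apply inj; rw [hpv]; simpa using h
            have := congrArg Fin.val this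
            simp at this
            omega
          · exact h
        rcases Nat.lt_or_ge (σ ⟨i, hi⟩ : ℕ) k with hlt | hge
        · apply no321 z ⟨i, hi⟩ p
          · exact Fin.mk_lt_mk.mpr (by omega)
          · exact Fin.lt_def.mpr (by simpa using hpgt)
          · exact Fin.lt_def.mpr (by simp [← hkdef] at hlt ⊢; omega)
          · rw [hpv]; exact Fin.lt_def.mpr (by simp; omega)
        · apply no132 jF ⟨i, hi⟩ p
          · exact Fin.lt_def.mpr (by simp [← hjdef]; omega)
          · exact Fin.lt_def.mpr (by simpa using hpgt)
          · rw [hjz, hpv]; exact Fin.lt_def.mpr (by simp [hzdef]; omega)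
          · rw [hpv]; exact Fin.lt_def.mpr (by simp; omega)
    -- Claim C
    have C : ∀ i, ∀ hi : i < n, j + k ≤ i → (σ ⟨i, hi⟩ : ℕ) = i := by
      intro i
      induction i using Nat.strong_induction_on with
      | _ i IH =>
        intro hi hjki
        -- σ i ≥ i
        have hge : i ≤ (σ ⟨i, hi⟩ : ℕ) := by
          by_contra hc
          push_neg at hc
          set v := (σ ⟨i, hi⟩ : ℕ) with hv
          rcases Nat.lt_or_ge v k with h1 | h1
          · -- v < k : at position j + v
            have h2 := B (j + v) (by omega) (by omega) (by omega)
            have heq : (⟨i, hi⟩ : Fin n) = ⟨j + v, by omega⟩ := by apply inj; omega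
            simp only [Fin.mk.injEq] at heq
            omega
          rcases Nat.lt_or_ge v (k + j) with h2 | h2
          · -- k ≤ v < k + j : at position v - k
            have h3 := A (v - k) (by omega) (by omega)
            have heq : (⟨i, hi⟩ : Fin n) = ⟨v - k, by omega⟩ := by apply inj; omega
            simp only [Fin.mk.injEq] at heq
            omega
          · -- k + j ≤ v < i : at position v
            have h3 := IH v (by omega) (by omega) (by omega)
            have heq : (⟨i, hi⟩ : Fin n) = ⟨v, by omega⟩ := by apply inj; omega
            simp only [Fin.mk.injEq] at heq
            omega
        rcases Nat.eq_or_lt_of_le hge with he | hgt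
        · omega
        exfalso
        -- value i is at some position p > i
        set p := σ.symm ⟨i, hi⟩ with hp
        have hpv : σ p = ⟨i, hi⟩ := σ.apply_symm_apply _
        have hpgt : i < (p : ℕ) := by
          rcases Nat.lt_trichotomy (p : ℕ) i with h | h | h
          · exfalso
            rcases Nat.lt_or_ge (p : ℕ) j with hr | hr
            · have h2 := A _ p.isLt hr
              rw [Fin.eta, hpv] at h2
              simp at h2
              omega
            rcases Nat.lt_or_ge (p : ℕ) (j + k) with hr2 | hr2
            · have h2 := B _ p.isLt hr hr2
              rw [Fin.eta, hpv] at h2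
              simp at h2
              omega
            · have h2 := IH _ h p.isLt hr2
              rw [Fin.eta, hpv] at h2
              simp at h2
              omega
          · exfalso
            have : p = ⟨i, hi⟩ := Fin.ext (by simpa using h)
            rw [this] at hpv
            have := congrArg Fin.val hpv
            simp at this
            omega
          · exact h
        apply no132 jF ⟨i, hi⟩ p
        · exact Fin.lt_def.mpr (by simp [← hjdef]; omega)
        · exact Fin.lt_def.mpr (by simpa using hpgt)
        · rw [hjz, hpv]; exact Fin.lt_def.mpr (by simp [hzdef]; omega)
        · rw [hpv]; exact Fin.lt_def.mpr (by simp; omega)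
    refine ⟨j, k, hj1, hk1, hjkn, ?_⟩
    ext i
    rw [rotPerm_val hjkn]
    rcases Nat.lt_or_ge (i : ℕ) j with h1 | h1
    · rw [if_pos h1, ← A _ i.isLt h1, Fin.eta]
    rcases Nat.lt_or_ge (i : ℕ) (j + k) with h2 | h2
    · rw [if_neg (by omega), if_pos h2, ← B _ i.isLt h1 h2, Fin.eta]
    · rw [if_neg (by omega), if_neg (by omega), ← C _ i.isLt h2, Fin.eta]
theorem inv_132_321 (n : ℕ) (hn : 1 ≤ n) (q : ℚ) :
    ∑ σ ∈ Finset.univ.filter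
        (fun σ : Equiv.Perm (Fin n) => permAvoids σ p132 ∧ permAvoids σ p321),
      q ^ invNum σ
      = 1 + ∑ k ∈ Finset.Icc 1 (n - 1), ∑ j ∈ Finset.Icc 1 (n - k), q ^ (j * k) := by
  classical
  set S : Finset ((_ : ℕ) × ℕ) := (Finset.Icc 1 (n - 1)).sigma (fun k => Finset.Icc 1 (n - k))
    with hS
  have hmemS : ∀ p : (_ : ℕ) × ℕ, p ∈ S ↔ (1 ≤ p.1 ∧ p.1 ≤ n - 1 ∧ 1 ≤ p.2 ∧ p.2 ≤ n - p.1) := by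
    intro p
    simp [hS, Finset.mem_sigma, Finset.mem_Icc, and_assoc]
  have hsum : ∀ p : (_ : ℕ) × ℕ, p ∈ S → p.2 + p.1 ≤ n := by
    intro p hp
    rw [hmemS] at hp
    omega
  have hfilter : (Finset.univ.filter
        (fun σ : Equiv.Perm (Fin n) => permAvoids σ p132 ∧ permAvoids σ p321))
      = insert 1 (S.image (fun p => rotPerm n p.2 p.1)) := by
    ext σ
    simp only [Finset.mem_filter, Finset.mem_univ, true_and, Finset.mem_insert,
      Finset.mem_image]
    constructor
    · rintro ⟨h1, h2⟩
      rcases avoider_eq_one_or_rot hn σ h1 h2 with h | ⟨j, k, hj, hk, hjk, h⟩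
      · exact Or.inl h
      · refine Or.inr ⟨⟨k, j⟩, ?_, h.symm⟩
        rw [hmemS]
        dsimp only
        exact ⟨hk, by omega, hj, by omega⟩
    · rintro (h | ⟨p, hp, h⟩)
      · subst h
        rw [← rotPerm_zero n]
        exact ⟨rotPerm_avoids132 (by omega), rotPerm_avoids321 (by omega)⟩
      · subst h
        exact ⟨rotPerm_avoids132 (hsum p hp), rotPerm_avoids321 (hsum p hp)⟩
  have hone : (1 : Equiv.Perm (Fin n)) ∉ S.image (fun p => rotPerm n p.2 p.1) := by
    rw [Finset.mem_image]
    rintro ⟨p, hp, h⟩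
    have hps := hsum p hp
    rw [hmemS] at hp
    have := congrArg (fun τ : Equiv.Perm (Fin n) => (τ ⟨0, hn⟩ : ℕ)) h
    rw [rotPerm_val hps] at this
    rw [if_pos (by simp; omega)] at this
    simp [Equiv.Perm.one_apply] at this
    omega
  have hinj : Set.InjOn (fun p : (_ : ℕ) × ℕ => rotPerm n p.2 p.1) S := by
    intro p hp p' hp' h
    have hp0 := Finset.mem_coe.mp hp
    have hp0' := Finset.mem_coe.mp hp'
    have hsp := hsum p hp0
    have hsp' := hsum p' hp0'
    have hpm := (hmemS p).mp hp0
    have hpm' := (hmemS p').mp hp0'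
    simp only at h
    have hk : p.1 = p'.1 := by
      have := congrArg (fun τ : Equiv.Perm (Fin n) => (τ ⟨0, hn⟩ : ℕ)) h
      rw [rotPerm_val hsp, rotPerm_val hsp'] at this
      rw [if_pos (by simp; omega), if_pos (by simp; omega)] at this
      simpa using this
    have hj : p.2 = p'.2 := by
      have h2 := congrArg Equiv.symm h
      rw [rotPerm_symm, rotPerm_symm] at h2
      have := congrArg (fun τ : Equiv.Perm (Fin n) => (τ ⟨0, hn⟩ : ℕ)) h2
      rw [rotPerm_val (by omega), rotPerm_val (by omega)] at this
      rw [if_pos (by simp; omega), if_pos (by simp; omega)] at this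
      simpa using this
    exact Sigma.ext hk (heq_of_eq hj)
  rw [hfilter, Finset.sum_insert hone, Finset.sum_image hinj]
  have hinv1 : invNum (1 : Equiv.Perm (Fin n)) = 0 := by
    rw [← rotPerm_zero n, invNum_rotPerm (by omega)]
  rw [hinv1, pow_zero]
  congr 1
  conv_rhs => rw [Finset.sum_sigma']
  apply Finset.sum_congr rfl
  intro p hp
  rw [invNum_rotPerm (hsum p hp)]
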